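/- Suppose {(A_i, B_i)}_{i=1}^h is a system where each A_i is a 2-element set, each B_i is an m-element set, A_i ∩ B_i = ∅ for all i, and A_i ∩ B_j ≠ ∅ for all i < j. Then h ≤ (m+2)(m+1)/2. -/

import Mathlib

open Polynomial Finset

/-- Skew Bollobás bound for (2,m)-systems. -/
theorem skew_two_m_system {α : Type*} [DecidableEq α] (h m : ℕ)
    (A B : Fin h → Finset α)
    (hA : ∀ i, (A i).card = 2) (hB : ∀ i, (B i).card = m)
    (hdisj : ∀ i, A i ∩ B i = ∅)
    (hskew : ∀ i j, i < j → (A i ∩ B j).Nonempty) :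
    h ≤ (m + 2) * (m + 1) / 2 := by
  classical
  -- injective real labeling on the relevant elements
  set S : Finset α := Finset.univ.biUnion (fun i : Fin h => A i ∪ B i) with hS
  let e : ↥S ≃ Fin S.card := S.equivFin
  set t : α → ℝ := fun x => if hx : x ∈ S then ((e ⟨x, hx⟩ : Fin S.card) : ℝ) else 0 with ht
  have ht_inj : ∀ x ∈ S, ∀ y ∈ S, t x = t y → x = y := by
    intro x hx y hy hxy
    simp only [ht, dif_pos hx, dif_pos hy] at hxy
    have h1 : e ⟨x, hx⟩ = e ⟨y, hy⟩ := by
      have : ((e ⟨x, hx⟩ : Fin S.card) : ℕ) = ((e ⟨y, hy⟩ : Fin S.card) : ℕ) := by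
        exact_mod_cast hxy
      exact Fin.ext this
    exact congrArg Subtype.val (e.injective h1)
  -- extract the two elements of each A i
  choose p q hpq hA2 using fun i => Finset.card_eq_two.mp (hA i)
  have hpA : ∀ i, p i ∈ A i := fun i => by rw [hA2 i]; simp
  have hqA : ∀ i, q i ∈ A i := fun i => by rw [hA2 i]; simp
  have hAS : ∀ i, A i ⊆ S := fun i x hx =>
    Finset.mem_biUnion.mpr ⟨i, Finset.mem_univ i, Finset.mem_union_left _ hx⟩
  have hBS : ∀ i, B i ⊆ S := fun i x hx =>
    Finset.mem_biUnion.mpr ⟨i, Finset.mem_univ i, Finset.mem_union_right _ hx⟩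
  -- the polynomials
  set P : Fin h → ℝ[X] := fun j => ∏ y ∈ B j, (X - C (t y)) with hP
  have hPdeg : ∀ j, (P j).natDegree < m + 1 := by
    intro j
    have h1 : (P j).natDegree ≤ ∑ y ∈ B j, (X - C (t y)).natDegree :=
      Polynomial.natDegree_prod_le _ _
    have h2 : ∑ y ∈ B j, (X - C (t y)).natDegree = m := by
      simp [natDegree_X_sub_C, hB j]
    exact Nat.lt_succ_of_le (h2 ▸ h1)
  -- the pairing vanishes above the diagonal
  have hvanish : ∀ i j, i < j → (P j).eval (t (p i)) * (P j).eval (t (q i)) = 0 := by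
    intro i j hij
    obtain ⟨x, hx⟩ := hskew i j hij
    rw [Finset.mem_inter] at hx
    have hzero : ∀ z ∈ B j, (P j).eval (t z) = 0 := by
      intro z hzB
      rw [hP]
      simp only [eval_prod, eval_sub, eval_X, eval_C]
      exact Finset.prod_eq_zero hzB (by ring)
    have hxA : x = p i ∨ x = q i := by
      have hh := hx.1; rw [hA2 i] at hh; simpa using hh
    rcases hxA with rfl | rfl
    · rw [hzero _ hx.2, zero_mul]
    · rw [hzero _ hx.2, mul_zero]
  -- the pairing is nonzero on the diagonal
  have hdiag : ∀ j, (P j).eval (t (p j)) * (P j).eval (t (q j)) ≠ 0 := by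
    intro j
    have key : ∀ z ∈ A j, (P j).eval (t z) ≠ 0 := by
      intro z hz
      rw [hP]
      simp only [eval_prod, eval_sub, eval_X, eval_C]
      refine Finset.prod_ne_zero_iff.mpr ?_
      intro y hy hcontra
      have htzy : t z = t y := by linarith [sub_eq_zero.mp hcontra]
      have hzy : z = y := ht_inj z (hAS j hz) y (hBS j hy) htzy
      subst hzy
      have hmem : z ∈ A j ∩ B j := Finset.mem_inter.mpr ⟨hz, hy⟩
      rw [hdisj j] at hmem
      exact absurd hmem (Finset.notMem_empty z)
    exact mul_ne_zero (key _ (hpA j)) (key _ (hqA j))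
  -- the vectors
  set w : Fin h → Sym2 (Fin (m+1)) → ℝ := fun i =>
    Sym2.lift ⟨fun a b =>
      t (p i) ^ (a : ℕ) * t (q i) ^ (b : ℕ) + t (p i) ^ (b : ℕ) * t (q i) ^ (a : ℕ),
      fun a b => by ring⟩ with hw
  have hwval : ∀ (i : Fin h) (a b : Fin (m+1)), w i (Sym2.mk a b) =
      t (p i) ^ (a : ℕ) * t (q i) ^ (b : ℕ) + t (p i) ^ (b : ℕ) * t (q i) ^ (a : ℕ) := by
    intro i a b
    rw [hw]
    exact Sym2.lift_mk _ a b
  -- linear independence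
  have hli : LinearIndependent ℝ w := by
    rw [linearIndependent_iff']
    intro s g hsum
    by_contra hcon
    push_neg at hcon
    obtain ⟨i₀, hi₀s, hi₀⟩ := hcon
    set sbad := s.filter (fun i => g i ≠ 0) with hsbad
    have hne : sbad.Nonempty := ⟨i₀, Finset.mem_filter.mpr ⟨hi₀s, hi₀⟩⟩
    set j := sbad.max' hne with hj
    have hjs : j ∈ s := (Finset.mem_filter.mp (sbad.max'_mem hne)).1
    have hgj : g j ≠ 0 := (Finset.mem_filter.mp (sbad.max'_mem hne)).2
    set val : Fin h → ℝ := fun i => (P j).eval (t (p i)) * (P j).eval (t (q i)) with hval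
    -- the paired sum vanishes
    have hT : ∑ i ∈ s, g i * val i = 0 := by
      have expand : ∀ i, val i =
          ∑ a : Fin (m+1), ∑ b : Fin (m+1),
            ((P j).coeff a * t (p i) ^ (a : ℕ)) * ((P j).coeff b * t (q i) ^ (b : ℕ)) := by
        intro i
        simp only [hval]
        have e1 : (P j).eval (t (p i)) = ∑ a : Fin (m+1), (P j).coeff a * t (p i) ^ (a : ℕ) := by
          rw [Polynomial.eval_eq_sum_range' (hPdeg j), ← Fin.sum_univ_eq_sum_range]
        have e2 : (P j).eval (t (q i)) = ∑ b : Fin (m+1), (P j).coeff b * t (q i) ^ (b : ℕ) := by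
          rw [Polynomial.eval_eq_sum_range' (hPdeg j), ← Fin.sum_univ_eq_sum_range]
        rw [e1, e2, Finset.sum_mul_sum]
      have hSab : ∀ a b : Fin (m+1),
          (∑ i ∈ s, g i * (t (p i) ^ (a : ℕ) * t (q i) ^ (b : ℕ)))
          + (∑ i ∈ s, g i * (t (p i) ^ (b : ℕ) * t (q i) ^ (a : ℕ))) = 0 := by
        intro a b
        have hz := congrFun hsum (Sym2.mk a b)
        simp only [Finset.sum_apply, Pi.smul_apply, smul_eq_mul, Pi.zero_apply] at hz
        rw [← Finset.sum_add_distrib, ← hz]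
        apply Finset.sum_congr rfl
        intro i _
        rw [hwval i a b]
        ring
      have exp2 : ∑ i ∈ s, g i * val i
          = ∑ a : Fin (m+1), ∑ b : Fin (m+1), ((P j).coeff a * (P j).coeff b)
            * ∑ i ∈ s, g i * (t (p i) ^ (a : ℕ) * t (q i) ^ (b : ℕ)) := by
        simp_rw [expand, Finset.mul_sum]
        rw [Finset.sum_comm]
        refine Finset.sum_congr rfl fun a _ => ?_
        rw [Finset.sum_comm]
        refine Finset.sum_congr rfl fun b _ => ?_
        refine Finset.sum_congr rfl fun i _ => ?_
        ring
      have swap : (∑ a : Fin (m+1), ∑ b : Fin (m+1), ((P j).coeff a * (P j).coeff b)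
            * ∑ i ∈ s, g i * (t (p i) ^ (a : ℕ) * t (q i) ^ (b : ℕ)))
          = ∑ a : Fin (m+1), ∑ b : Fin (m+1), ((P j).coeff a * (P j).coeff b)
            * ∑ i ∈ s, g i * (t (p i) ^ (b : ℕ) * t (q i) ^ (a : ℕ)) := by
        rw [Finset.sum_comm]
        refine Finset.sum_congr rfl fun a _ => ?_
        refine Finset.sum_congr rfl fun b _ => ?_
        ring
      have twoT : (∑ i ∈ s, g i * val i) + (∑ i ∈ s, g i * val i) = 0 := by
        nth_rewrite 1 [exp2]
        nth_rewrite 1 [exp2]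
        nth_rewrite 2 [swap]
        rw [← Finset.sum_add_distrib]
        refine Finset.sum_eq_zero fun a _ => ?_
        rw [← Finset.sum_add_distrib]
        refine Finset.sum_eq_zero fun b _ => ?_
        rw [← mul_add, hSab a b, mul_zero]
      linarith
    -- but the paired sum equals the nonzero top term
    have hT2 : ∑ i ∈ s, g i * val i = g j * val j := by
      have hsub : ({j} : Finset (Fin h)) ⊆ s := Finset.singleton_subset_iff.mpr hjs
      have hz : ∀ i ∈ s, i ∉ ({j} : Finset (Fin h)) → g i * val i = 0 := by
        intro i his hinotj
        rw [Finset.mem_singleton] at hinotj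
        rcases lt_trichotomy i j with hlt | heq | hgt
        · simp only [hval]
          rw [hvanish i j hlt, mul_zero]
        · exact absurd heq hinotj
        · have hgi : g i = 0 := by
            by_contra hgi
            have hmem : i ∈ sbad := Finset.mem_filter.mpr ⟨his, hgi⟩
            exact absurd (sbad.le_max' i hmem) (not_le.mpr hgt)
          rw [hgi, zero_mul]
      rw [← Finset.sum_subset hsub hz, Finset.sum_singleton]
    rw [hT2] at hT
    exact (mul_ne_zero hgj (hdiag j)) hT
  -- conclude by dimension count
  have hcard := hli.fintype_card_le_finrank
  rw [Fintype.card_fin, Module.finrank_fintype_fun_eq_card, Sym2.card, Fintype.card_fin,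
    Nat.choose_two_right] at hcard
  calc h ≤ (m + 1 + 1) * (m + 1 + 1 - 1) / 2 := hcard
    _ = (m + 2) * (m + 1) / 2 := by norm_num
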